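/- Let G : V' → V be a C^r diffeomorphism between open subsets of E = ℝ^{2d+1} preserving the standard contact form α_0 and the vector field v_0 = ∂/∂x_0. Let K ⊂ V' be compact. Then there exists C > 0 such that for all y, y' ∈ K and all ξ ∈ E* written as ξ = ξ_0·α_0(G(y)) + ξ_{+,-} with ξ_0 = π_0*(ξ) and ξ_{+,-} in the (ξ^+, ξ^-)-subspace: (1) ‖DG*_{y'}(ξ) − DG*_y(ξ)‖ ≤ C(|ξ_0|·‖y'−y‖² + ‖ξ_{+,-}‖·‖y'−y‖); and (2) |⟨ξ, D²G_{y'}(v, v')⟩| ≤ C(|ξ_0|·‖y'−y‖ + ‖ξ_{+,-}‖)·‖v‖·‖v'‖ for all v, v' ∈ E. -/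

import Mathlib

noncomputable def stmt10b (d : ℕ) :
    (ℝ × (Fin d → ℝ) × (Fin d → ℝ)) →ₗ[ℝ] (ℝ × (Fin d → ℝ) × (Fin d → ℝ)) →ₗ[ℝ] ℝ :=
  LinearMap.mk₂ ℝ (fun z v => (∑ i, z.2.2 i * v.2.1 i) - ∑ i, z.2.1 i * v.2.2 i)
    (fun m₁ m₂ n => by simp [add_mul, Finset.sum_add_distrib]; ring)
    (fun c m n => by
      simp only [Prod.smul_fst, Prod.smul_snd, Pi.smul_apply, smul_eq_mul, mul_sub, Finset.mul_sum]
      congr 1 <;> exact Finset.sum_congr rfl fun i _ => by ring)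
    (fun m n₁ n₂ => by simp [mul_add, Finset.sum_add_distrib]; ring)
    (fun c m n => by
      simp only [Prod.smul_fst, Prod.smul_snd, Pi.smul_apply, smul_eq_mul, mul_sub, Finset.mul_sum]
      congr 1 <;> exact Finset.sum_congr rfl fun i _ => by ring)

noncomputable def stmt10Bc (d : ℕ) :
    (ℝ × (Fin d → ℝ) × (Fin d → ℝ)) →L[ℝ] (ℝ × (Fin d → ℝ) × (Fin d → ℝ)) →L[ℝ] ℝ :=
  LinearMap.toContinuousLinearMap
    { toFun := fun z => LinearMap.toContinuousLinearMap (stmt10b d z)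
      map_add' := fun a b => ContinuousLinearMap.ext fun v => by simp
      map_smul' := fun c a => ContinuousLinearMap.ext fun v => by simp }

theorem stmt10Bc_apply (d : ℕ) (z v : ℝ × (Fin d → ℝ) × (Fin d → ℝ)) :
    stmt10Bc d z v = (∑ i, z.2.2 i * v.2.1 i) - ∑ i, z.2.1 i * v.2.2 i := rfl

theorem stmt10Bc_skew (d : ℕ) (z v : ℝ × (Fin d → ℝ) × (Fin d → ℝ)) :
    stmt10Bc d z v = -stmt10Bc d v z := by
  simp [stmt10Bc_apply, mul_comm]

set_option maxHeartbeats 16000000 in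
theorem stmt10 (d r : ℕ) (hr : 3 ≤ r)
    (α₀ : (ℝ × (Fin d → ℝ) × (Fin d → ℝ)) → (ℝ × (Fin d → ℝ) × (Fin d → ℝ)) → ℝ)
    (hα₀ : ∀ z v, α₀ z v =
      v.1 + (∑ i, z.2.2 i * v.2.1 i) - ∑ i, z.2.1 i * v.2.2 i)
    (V' : Set (ℝ × (Fin d → ℝ) × (Fin d → ℝ))) (hV' : IsOpen V')
    (G : (ℝ × (Fin d → ℝ) × (Fin d → ℝ)) → (ℝ × (Fin d → ℝ) × (Fin d → ℝ)))
    (hGdiff : ContDiffOn ℝ r G V') (hGinj : Set.InjOn G V')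
    (hcontact : ∀ x ∈ V', ∀ v, α₀ (G x) (fderiv ℝ G x v) = α₀ x v)
    (hv₀ : ∀ x ∈ V', fderiv ℝ G x (1, 0, 0) = (1, 0, 0))
    (K : Set (ℝ × (Fin d → ℝ) × (Fin d → ℝ))) (hK : IsCompact K) (hKV : K ⊆ V') :
    ∃ C > 0, ∀ y ∈ K, ∀ y' ∈ K, ∀ (ξ₀ : ℝ)
      (ξ ξpm : (ℝ × (Fin d → ℝ) × (Fin d → ℝ)) →L[ℝ] ℝ),
      (∀ v, ξ v = ξ₀ * α₀ (G y) v + ξpm v) →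
      (ξpm (1, 0, 0) = 0) →
      (‖ξ.comp (fderiv ℝ G y') - ξ.comp (fderiv ℝ G y)‖ ≤
        C * (|ξ₀| * ‖y' - y‖^2 + ‖ξpm‖ * ‖y' - y‖)) ∧
      (∀ v w : ℝ × (Fin d → ℝ) × (Fin d → ℝ),
        |ξ (fderiv ℝ (fun x => fderiv ℝ G x v) y' w)| ≤
          C * (|ξ₀| * ‖y' - y‖ + ‖ξpm‖) * ‖v‖ * ‖w‖) := by
  classical
  set D := fderiv ℝ G with hDdef
  have hr1 : (1 : WithTop ℕ∞) ≤ (r : ℕ∞) := by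
    exact_mod_cast Nat.one_le_of_lt (by omega : 1 < r)
  have hGdiffOn : DifferentiableOn ℝ G V' := hGdiff.differentiableOn (by norm_cast; omega)
  have hD : ∀ x ∈ V', HasFDerivAt G (D x) x := fun x hx =>
    (hGdiffOn.differentiableAt (hV'.mem_nhds hx)).hasFDerivAt
  have hDsm : ContDiffOn ℝ 2 D V' :=
    hGdiff.fderiv_of_isOpen hV' (by exact_mod_cast hr)
  have hDdiffOn : DifferentiableOn ℝ D V' := hDsm.differentiableOn (by norm_num)
  set D2 := fderiv ℝ D with hD2def
  have hD' : ∀ x ∈ V', HasFDerivAt D (D2 x) x := fun x hx =>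
    (hDdiffOn.differentiableAt (hV'.mem_nhds hx)).hasFDerivAt
  have hDcont : ContinuousOn D V' := hDsm.continuousOn
  have hD2cont : ContinuousOn D2 V' := hDsm.continuousOn_fderiv_of_isOpen hV' (by norm_num)
  have hGcont : ContinuousOn G V' := hGdiff.continuousOn
  set B := stmt10Bc d with hBdef
  set P : (ℝ × (Fin d → ℝ) × (Fin d → ℝ)) →L[ℝ] ℝ :=
    ContinuousLinearMap.fst ℝ ℝ ((Fin d → ℝ) × (Fin d → ℝ)) with hPdef
  set αc : (ℝ × (Fin d → ℝ) × (Fin d → ℝ)) → (ℝ × (Fin d → ℝ) × (Fin d → ℝ)) →L[ℝ] ℝ :=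
    fun z => P + B z with hαdef
  have hαc : ∀ z v, α₀ z v = αc z v := by
    intro z v
    rw [hα₀]
    simp only [hαdef, ContinuousLinearMap.add_apply, hBdef, stmt10Bc_apply, hPdef,
      ContinuousLinearMap.coe_fst']
    ring
  have hcontact' : ∀ x ∈ V', ∀ v, αc (G x) (D x v) = αc x v := fun x hx v => by
    rw [← hαc, ← hαc]; exact hcontact x hx v
  -- key derivative identity
  have key : ∀ x ∈ V', ∀ v w,
      αc (G x) (D2 x w v) + B (D x w) (D x v) = B w v := by
    intro x hx v w
    have hc : HasFDerivAt (fun z => αc (G z)) (B.comp (D x)) x := by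
      have h1 : HasFDerivAt (fun z => P + B z) B (G x) :=
        HasFDerivAt.const_add P (B.hasFDerivAt (x := G x))
      exact h1.comp x (hD x hx)
    have hu : HasFDerivAt (fun z => D z v)
        ((ContinuousLinearMap.apply ℝ (ℝ × (Fin d → ℝ) × (Fin d → ℝ)) v).comp (D2 x)) x :=
      (ContinuousLinearMap.apply ℝ (ℝ × (Fin d → ℝ) × (Fin d → ℝ)) v).hasFDerivAt.comp
        x (hD' x hx)
    have hf1 := hc.clm_apply hu
    have hf2 : HasFDerivAt (fun z => P v + B z v)
        ((ContinuousLinearMap.apply ℝ ℝ v).comp B) x :=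
      HasFDerivAt.const_add (P v) (((ContinuousLinearMap.apply ℝ ℝ v).comp B).hasFDerivAt)
    have heq : (fun z => αc (G z) (D z v)) =ᶠ[nhds x] (fun z => P v + B z v) := by
      filter_upwards [hV'.mem_nhds hx] with z hz
      rw [hcontact' z hz v]
      simp [hαdef]
    have hf1' : HasFDerivAt (fun z => P v + B z v)
        ((αc (G x)).comp
          ((ContinuousLinearMap.apply ℝ (ℝ × (Fin d → ℝ) × (Fin d → ℝ)) v).comp (D2 x)) +
          (B.comp (D x)).flip (D x v)) x :=
      hf1.congr_of_eventuallyEq heq.symm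
    have hEq := hf1'.unique hf2
    have h := congrArg (fun L => L w) hEq
    simpa using h
  have hsymm : ∀ x ∈ V', ∀ v w, D2 x v w = D2 x w v := fun x hx v w =>
    second_derivative_symmetric_of_eventually
      (Filter.eventually_of_mem (hV'.mem_nhds hx) (fun z hz => hD z hz)) (hD' x hx) v w
  have keyA : ∀ x ∈ V', ∀ v w, αc (G x) (D2 x w v) = 0 := by
    intro x hx v w
    have h1 := key x hx v w
    have h2 := key x hx w v
    rw [hsymm x hx v w] at h2
    have s1 := stmt10Bc_skew d (D x v) (D x w)
    have s2 := stmt10Bc_skew d v w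
    rw [← hBdef] at s1 s2
    linarith
  have keyB : ∀ x ∈ V', ∀ v w, B (D x w) (D x v) = B w v := by
    intro x hx v w
    have h1 := key x hx v w
    have h2 := keyA x hx v w
    linarith
  -- compactness setup
  obtain ⟨δ, δpos, hδ⟩ := hK.exists_cthickening_subset_open hV' hKV
  set K' := Metric.cthickening δ K with hK'def
  have hK'comp : IsCompact K' := hK.cthickening
  have hKK' : K ⊆ K' := Metric.self_subset_cthickening K
  obtain ⟨m₁, hm₁⟩ := hK'comp.exists_bound_of_continuousOn (hDcont.mono hδ)
  obtain ⟨m₂, hm₂⟩ := hK'comp.exists_bound_of_continuousOn (f := D2) (hD2cont.mono hδ)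
  obtain ⟨sg, hsg⟩ := hK'comp.exists_bound_of_continuousOn (hGcont.mono hδ)
  set M₁ := max m₁ 0 with hM₁def
  set M₂ := max m₂ 0 with hM₂def
  set SG := max sg 0 with hSGdef
  have hM₁ : ∀ z ∈ K', ‖D z‖ ≤ M₁ := fun z hz => (hm₁ z hz).trans (le_max_left _ _)
  have hM₂ : ∀ z ∈ K', ‖D2 z‖ ≤ M₂ := fun z hz => (hm₂ z hz).trans (le_max_left _ _)
  have hSG : ∀ z ∈ K', ‖G z‖ ≤ SG := fun z hz => (hsg z hz).trans (le_max_left _ _)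
  have hM₁0 : 0 ≤ M₁ := le_max_right _ _
  have hM₂0 : 0 ≤ M₂ := le_max_right _ _
  have hSG0 : 0 ≤ SG := le_max_right _ _
  have hball : ∀ y ∈ K, Metric.closedBall y δ ⊆ K' := fun y hy =>
    Metric.closedBall_subset_cthickening hy δ
  -- local Lipschitz bounds via mean value
  have hGlip : ∀ y ∈ K, ∀ y', ‖y' - y‖ ≤ δ → ‖G y' - G y‖ ≤ M₁ * ‖y' - y‖ := by
    intro y hy y' hle
    have hsub : Metric.closedBall y δ ⊆ K' := hball y hy
    exact (convex_closedBall y δ).norm_image_sub_le_of_norm_hasFDerivWithin_le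
      (fun z hz => (hD z (hδ (hsub hz))).hasFDerivWithinAt)
      (fun z hz => hM₁ z (hsub hz))
      (Metric.mem_closedBall_self δpos.le)
      (by simpa [Metric.mem_closedBall, dist_eq_norm] using hle)
  have hDlipB : ∀ y ∈ K, ∀ z ∈ Metric.closedBall y δ, ∀ z' ∈ Metric.closedBall y δ,
      ‖D z' - D z‖ ≤ M₂ * ‖z' - z‖ := by
    intro y hy z hz z' hz'
    have hsub : Metric.closedBall y δ ⊆ K' := hball y hy
    exact (convex_closedBall y δ).norm_image_sub_le_of_norm_hasFDerivWithin_le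
      (fun u hu => (hD' u (hδ (hsub hu))).hasFDerivWithinAt)
      (fun u hu => hM₂ u (hsub hu)) hz hz'
  have hDlip : ∀ y ∈ K, ∀ y', ‖y' - y‖ ≤ δ → ‖D y' - D y‖ ≤ M₂ * ‖y' - y‖ := by
    intro y hy y' hle
    exact hDlipB y hy y (Metric.mem_closedBall_self δpos.le) y'
      (by simpa [Metric.mem_closedBall, dist_eq_norm] using hle)
  -- Taylor estimate
  have hTay : ∀ y' ∈ K, ∀ y, ‖y - y'‖ ≤ δ →
      ‖G y - G y' - D y' (y - y')‖ ≤ M₂ * (‖y - y'‖ * ‖y - y'‖) := by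
    intro y' hy' y hle
    have hsub1 : Metric.closedBall y' ‖y - y'‖ ⊆ Metric.closedBall y' δ :=
      Metric.closedBall_subset_closedBall hle
    have hsub : Metric.closedBall y' ‖y - y'‖ ⊆ K' := hsub1.trans (hball y' hy')
    have hmv := (convex_closedBall y' ‖y - y'‖).norm_image_sub_le_of_norm_hasFDerivWithin_le
      (f := fun z => G z - D y' z) (f' := fun z => D z - D y') (C := M₂ * ‖y - y'‖)
      (x := y') (y := y)
      (fun z hz => ((hD z (hδ (hsub hz))).sub ((D y').hasFDerivAt)).hasFDerivWithinAt)
      (fun z hz => by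
        have h1 : ‖D z - D y'‖ ≤ M₂ * ‖z - y'‖ :=
          hDlipB y' hy' y' (Metric.mem_closedBall_self δpos.le) z (hsub1 hz)
        have h2 : ‖z - y'‖ ≤ ‖y - y'‖ := by
          simpa [Metric.mem_closedBall, dist_eq_norm] using hz
        exact h1.trans (by nlinarith)
      )
      (Metric.mem_closedBall_self (norm_nonneg _))
      (by simp [Metric.mem_closedBall, dist_eq_norm])
    calc ‖G y - G y' - D y' (y - y')‖
        = ‖(G y - D y' y) - (G y' - D y' y')‖ := by rw [map_sub]; congr 1; abel
      _ ≤ M₂ * ‖y - y'‖ * ‖y - y'‖ := hmv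
      _ = M₂ * (‖y - y'‖ * ‖y - y'‖) := by ring
  -- global Lipschitz on K
  obtain ⟨LG, hLG0, hGlipK⟩ :
      ∃ L, 0 ≤ L ∧ ∀ y ∈ K, ∀ y' ∈ K, ‖G y' - G y‖ ≤ L * ‖y' - y‖ := by
    have hq : 0 ≤ 2 * SG / δ := div_nonneg (by linarith) δpos.le
    refine ⟨M₁ + 2 * SG / δ, by linarith, ?_⟩
    intro y hy y' hy'
    by_cases hle : ‖y' - y‖ ≤ δ
    · calc ‖G y' - G y‖ ≤ M₁ * ‖y' - y‖ := hGlip y hy y' hle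
        _ ≤ (M₁ + 2 * SG / δ) * ‖y' - y‖ :=
          mul_le_mul_of_nonneg_right (by linarith) (norm_nonneg _)
    · push_neg at hle
      have h1 : ‖G y' - G y‖ ≤ 2 * SG := by
        have e1 := hSG y (hKK' hy); have e2 := hSG y' (hKK' hy')
        calc ‖G y' - G y‖ ≤ ‖G y'‖ + ‖G y‖ := norm_sub_le _ _
          _ ≤ 2 * SG := by linarith
      have h2 : 2 * SG = 2 * SG / δ * δ := by field_simp
      have h3 : 2 * SG / δ * δ ≤ 2 * SG / δ * ‖y' - y‖ :=
        mul_le_mul_of_nonneg_left hle.le hq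
      have h4 : 0 ≤ M₁ * ‖y' - y‖ := mul_nonneg hM₁0 (norm_nonneg _)
      calc ‖G y' - G y‖ ≤ 2 * SG / δ * ‖y' - y‖ := by linarith
        _ ≤ (M₁ + 2 * SG / δ) * ‖y' - y‖ := by ring_nf; linarith
  obtain ⟨LD, hLD0, hDlipK⟩ :
      ∃ L, 0 ≤ L ∧ ∀ y ∈ K, ∀ y' ∈ K, ‖D y' - D y‖ ≤ L * ‖y' - y‖ := by
    have hq : 0 ≤ 2 * M₁ / δ := div_nonneg (by linarith) δpos.le
    refine ⟨M₂ + 2 * M₁ / δ, by linarith, ?_⟩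
    intro y hy y' hy'
    by_cases hle : ‖y' - y‖ ≤ δ
    · calc ‖D y' - D y‖ ≤ M₂ * ‖y' - y‖ := hDlip y hy y' hle
        _ ≤ (M₂ + 2 * M₁ / δ) * ‖y' - y‖ :=
          mul_le_mul_of_nonneg_right (by linarith) (norm_nonneg _)
    · push_neg at hle
      have h1 : ‖D y' - D y‖ ≤ 2 * M₁ := by
        have e1 := hM₁ y (hKK' hy); have e2 := hM₁ y' (hKK' hy')
        calc ‖D y' - D y‖ ≤ ‖D y'‖ + ‖D y‖ := norm_sub_le _ _
          _ ≤ 2 * M₁ := by linarith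
      have h2 : 2 * M₁ = 2 * M₁ / δ * δ := by field_simp
      have h3 : 2 * M₁ / δ * δ ≤ 2 * M₁ / δ * ‖y' - y‖ :=
        mul_le_mul_of_nonneg_left hle.le hq
      have h4 : 0 ≤ M₂ * ‖y' - y‖ := mul_nonneg hM₂0 (norm_nonneg _)
      calc ‖D y' - D y‖ ≤ 2 * M₁ / δ * ‖y' - y‖ := by linarith
        _ ≤ (M₂ + 2 * M₁ / δ) * ‖y' - y‖ := by ring_nf; linarith
  -- bound on the covector αc (G y)
  obtain ⟨Aα, hAα0, hAα⟩ : ∃ A, 0 ≤ A ∧ ∀ y ∈ K, ‖αc (G y)‖ ≤ A := by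
    refine ⟨‖P‖ + ‖B‖ * SG, add_nonneg P.opNorm_nonneg (mul_nonneg B.opNorm_nonneg hSG0), ?_⟩
    intro y hy
    have h1 : ‖B (G y)‖ ≤ ‖B‖ * ‖G y‖ := B.le_opNorm _
    have h2 : ‖B‖ * ‖G y‖ ≤ ‖B‖ * SG :=
      mul_le_mul_of_nonneg_left (hSG y (hKK' hy)) B.opNorm_nonneg
    calc ‖αc (G y)‖ ≤ ‖P‖ + ‖B (G y)‖ := norm_add_le _ _
      _ ≤ ‖P‖ + ‖B‖ * SG := by linarith
  -- the constant
  obtain ⟨C, hC0, hC1, hC2, hC3, hC4, hC5, hC6⟩ :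
      ∃ C, 0 < C ∧ ‖B‖ * M₁ * M₂ ≤ C ∧ LD ≤ C ∧ 2 * M₁ * Aα / δ ^ 2 ≤ C ∧
        2 * M₁ / δ ≤ C ∧ ‖B‖ * LG * M₂ ≤ C ∧ M₂ ≤ C := by
    have n1 : 0 ≤ ‖B‖ * M₁ * M₂ := mul_nonneg (mul_nonneg B.opNorm_nonneg hM₁0) hM₂0
    have n3 : 0 ≤ 2 * M₁ * Aα / δ ^ 2 :=
      div_nonneg (mul_nonneg (by linarith) hAα0) (by positivity)
    have n4 : 0 ≤ 2 * M₁ / δ := div_nonneg (by linarith) δpos.le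
    have n5 : 0 ≤ ‖B‖ * LG * M₂ := mul_nonneg (mul_nonneg B.opNorm_nonneg hLG0) hM₂0
    exact ⟨‖B‖ * M₁ * M₂ + LD + 2 * M₁ * Aα / δ ^ 2 + 2 * M₁ / δ + ‖B‖ * LG * M₂ + M₂ + 1,
      by linarith, by linarith, by linarith, by linarith, by linarith, by linarith, by linarith⟩
  refine ⟨C, hC0, ?_⟩
  intro y hy y' hy' ξ₀ ξ ξpm hξ hξpm
  have hξeq : ∀ v, ξ v = ξ₀ * αc (G y) v + ξpm v := fun v => by
    rw [hξ v, hαc]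
  have hM₁y' : ‖D y'‖ ≤ M₁ := hM₁ y' (hKK' hy')
  have hM₁y : ‖D y‖ ≤ M₁ := hM₁ y (hKK' hy)
  have hM₂y' : ‖D2 y'‖ ≤ M₂ := hM₂ y' (hKK' hy')
  have habs0 : (0:ℝ) ≤ |ξ₀| := abs_nonneg _
  have hnpm : (0:ℝ) ≤ ‖ξpm‖ := norm_nonneg _
  constructor
  · -- part (1)
    by_cases hle : ‖y' - y‖ ≤ δ
    · -- near case
      have haP : ∀ v, αc (G y) (D y' v) - αc (G y) (D y v)
          = -(B (G y' - G y - D y' (y' - y)) (D y' v)) := by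
        intro v
        have e1 := hcontact' y' (hKV hy') v
        have e2 := hcontact' y (hKV hy) v
        have e3 := keyB y' (hKV hy') v (y' - y)
        simp only [hαdef, ContinuousLinearMap.add_apply, map_sub,
          ContinuousLinearMap.sub_apply] at e1 e2 e3 ⊢
        linarith
      have hle' : ‖y - y'‖ ≤ δ := by rwa [norm_sub_rev]
      have hTayb : ‖G y' - G y - D y' (y' - y)‖ ≤ M₂ * (‖y' - y‖ * ‖y' - y‖) := by
        have h := hTay y' hy' y hle'
        have hswap : G y' - G y - D y' (y' - y) = -(G y - G y' - D y' (y - y')) := by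
          rw [map_sub, map_sub]; abel
        rw [hswap, norm_neg, norm_sub_rev y' y]
        exact h
      set R := G y' - G y - D y' (y' - y) with hRdef
      have hptw : ∀ v, ‖(ξ.comp (D y') - ξ.comp (D y)) v‖ ≤
          (|ξ₀| * (‖B‖ * M₁ * M₂) * ‖y' - y‖ ^ 2 + ‖ξpm‖ * LD * ‖y' - y‖) * ‖v‖ := by
        intro v
        have hv1 : (ξ.comp (D y') - ξ.comp (D y)) v = ξ (D y' v) - ξ (D y v) := by
          simp only [ContinuousLinearMap.sub_apply, ContinuousLinearMap.comp_apply]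
        have hA : |αc (G y) (D y' v) - αc (G y) (D y v)| ≤
            ‖B‖ * M₁ * M₂ * ‖y' - y‖ ^ 2 * ‖v‖ := by
          rw [haP v, abs_neg]
          have h1 : |B R (D y' v)| ≤ ‖B‖ * ‖R‖ * ‖D y' v‖ := by
            have := B.le_opNorm₂ R (D y' v)
            simpa [Real.norm_eq_abs] using this
          have h2 : ‖D y' v‖ ≤ M₁ * ‖v‖ := by
            have := (D y').le_opNorm v
            have := mul_le_mul_of_nonneg_right hM₁y' (norm_nonneg v)
            linarith
          have h3 : ‖B‖ * ‖R‖ * ‖D y' v‖ ≤ ‖B‖ * ‖R‖ * (M₁ * ‖v‖) :=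
            mul_le_mul_of_nonneg_left h2 (mul_nonneg B.opNorm_nonneg (norm_nonneg R))
          have h4 : ‖B‖ * ‖R‖ * (M₁ * ‖v‖) ≤ ‖B‖ * (M₂ * (‖y' - y‖ * ‖y' - y‖)) * (M₁ * ‖v‖) := by
            have := mul_le_mul_of_nonneg_left hTayb B.opNorm_nonneg
            exact mul_le_mul_of_nonneg_right this (mul_nonneg hM₁0 (norm_nonneg v))
          calc |B R (D y' v)| ≤ ‖B‖ * ‖R‖ * ‖D y' v‖ := h1
            _ ≤ ‖B‖ * (M₂ * (‖y' - y‖ * ‖y' - y‖)) * (M₁ * ‖v‖) := le_trans h3 h4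
            _ = ‖B‖ * M₁ * M₂ * ‖y' - y‖ ^ 2 * ‖v‖ := by ring
        have hB2 : |ξpm (D y' v) - ξpm (D y v)| ≤ ‖ξpm‖ * LD * ‖y' - y‖ * ‖v‖ := by
          have hv2 : ξpm (D y' v) - ξpm (D y v) = ξpm ((D y' - D y) v) := by
            rw [ContinuousLinearMap.sub_apply, map_sub]
          rw [hv2]
          have h1 : |ξpm ((D y' - D y) v)| ≤ ‖ξpm‖ * ‖(D y' - D y) v‖ := by
            have := ξpm.le_opNorm ((D y' - D y) v)
            simpa [Real.norm_eq_abs] using this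
          have h2 : ‖(D y' - D y) v‖ ≤ ‖D y' - D y‖ * ‖v‖ := (D y' - D y).le_opNorm v
          have h3 : ‖D y' - D y‖ * ‖v‖ ≤ LD * ‖y' - y‖ * ‖v‖ :=
            mul_le_mul_of_nonneg_right (hDlipK y hy y' hy') (norm_nonneg v)
          have h4 : ‖ξpm‖ * ‖(D y' - D y) v‖ ≤ ‖ξpm‖ * (LD * ‖y' - y‖ * ‖v‖) :=
            mul_le_mul_of_nonneg_left (le_trans h2 h3) hnpm
          calc |ξpm ((D y' - D y) v)| ≤ ‖ξpm‖ * (LD * ‖y' - y‖ * ‖v‖) := le_trans h1 h4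
            _ = ‖ξpm‖ * LD * ‖y' - y‖ * ‖v‖ := by ring
        rw [hv1, hξeq (D y' v), hξeq (D y v)]
        have hsplit : ξ₀ * αc (G y) (D y' v) + ξpm (D y' v) -
            (ξ₀ * αc (G y) (D y v) + ξpm (D y v)) =
            ξ₀ * (αc (G y) (D y' v) - αc (G y) (D y v)) +
            (ξpm (D y' v) - ξpm (D y v)) := by ring
        rw [Real.norm_eq_abs, hsplit]
        have h5 : |ξ₀ * (αc (G y) (D y' v) - αc (G y) (D y v))| ≤
            |ξ₀| * (‖B‖ * M₁ * M₂ * ‖y' - y‖ ^ 2 * ‖v‖) := by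
          rw [abs_mul]
          exact mul_le_mul_of_nonneg_left hA habs0
        calc |ξ₀ * (αc (G y) (D y' v) - αc (G y) (D y v)) +
            (ξpm (D y' v) - ξpm (D y v))| ≤
            |ξ₀ * (αc (G y) (D y' v) - αc (G y) (D y v))| +
            |ξpm (D y' v) - ξpm (D y v)| := abs_add_le _ _
          _ ≤ |ξ₀| * (‖B‖ * M₁ * M₂ * ‖y' - y‖ ^ 2 * ‖v‖) +
              ‖ξpm‖ * LD * ‖y' - y‖ * ‖v‖ := add_le_add h5 hB2
          _ = (|ξ₀| * (‖B‖ * M₁ * M₂) * ‖y' - y‖ ^ 2 + ‖ξpm‖ * LD * ‖y' - y‖) * ‖v‖ := by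
              ring
      have hop : ‖ξ.comp (D y') - ξ.comp (D y)‖ ≤
          |ξ₀| * (‖B‖ * M₁ * M₂) * ‖y' - y‖ ^ 2 + ‖ξpm‖ * LD * ‖y' - y‖ := by
        apply ContinuousLinearMap.opNorm_le_bound
        · have n1 : 0 ≤ |ξ₀| * (‖B‖ * M₁ * M₂) * ‖y' - y‖ ^ 2 := by
            apply mul_nonneg (mul_nonneg habs0 _) (sq_nonneg _)
            exact mul_nonneg (mul_nonneg B.opNorm_nonneg hM₁0) hM₂0
          have n2 : 0 ≤ ‖ξpm‖ * LD * ‖y' - y‖ :=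
            mul_nonneg (mul_nonneg hnpm hLD0) (norm_nonneg _)
          linarith
        · exact hptw
      have t1 : 0 ≤ |ξ₀| * ‖y' - y‖ ^ 2 := mul_nonneg habs0 (sq_nonneg _)
      have t2 : 0 ≤ ‖ξpm‖ * ‖y' - y‖ := mul_nonneg hnpm (norm_nonneg _)
      have u1 : |ξ₀| * (‖B‖ * M₁ * M₂) * ‖y' - y‖ ^ 2 ≤ C * (|ξ₀| * ‖y' - y‖ ^ 2) := by
        have := mul_le_mul_of_nonneg_right hC1 t1
        calc |ξ₀| * (‖B‖ * M₁ * M₂) * ‖y' - y‖ ^ 2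
            = ‖B‖ * M₁ * M₂ * (|ξ₀| * ‖y' - y‖ ^ 2) := by ring
          _ ≤ C * (|ξ₀| * ‖y' - y‖ ^ 2) := this
      have u2 : ‖ξpm‖ * LD * ‖y' - y‖ ≤ C * (‖ξpm‖ * ‖y' - y‖) := by
        have := mul_le_mul_of_nonneg_right hC2 t2
        calc ‖ξpm‖ * LD * ‖y' - y‖ = LD * (‖ξpm‖ * ‖y' - y‖) := by ring
          _ ≤ C * (‖ξpm‖ * ‖y' - y‖) := this
      calc ‖ξ.comp (D y') - ξ.comp (D y)‖ ≤
          |ξ₀| * (‖B‖ * M₁ * M₂) * ‖y' - y‖ ^ 2 + ‖ξpm‖ * LD * ‖y' - y‖ := hop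
        _ ≤ C * (|ξ₀| * ‖y' - y‖ ^ 2) + C * (‖ξpm‖ * ‖y' - y‖) := add_le_add u1 u2
        _ = C * (|ξ₀| * ‖y' - y‖ ^ 2 + ‖ξpm‖ * ‖y' - y‖) := by ring
    · -- far case
      push_neg at hle
      have hξnorm : ‖ξ‖ ≤ |ξ₀| * Aα + ‖ξpm‖ := by
        apply ContinuousLinearMap.opNorm_le_bound _
          (add_nonneg (mul_nonneg habs0 hAα0) hnpm)
        intro v
        rw [hξeq v, Real.norm_eq_abs]
        have ha1 : |αc (G y) v| ≤ Aα * ‖v‖ := by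
          have t1 := (αc (G y)).le_opNorm v
          have t2 : ‖αc (G y)‖ * ‖v‖ ≤ Aα * ‖v‖ :=
            mul_le_mul_of_nonneg_right (hAα y hy) (norm_nonneg v)
          rw [Real.norm_eq_abs] at t1
          linarith
        have ha2 : |ξpm v| ≤ ‖ξpm‖ * ‖v‖ := by
          have := ξpm.le_opNorm v
          rwa [Real.norm_eq_abs] at this
        have ha3 : |ξ₀ * αc (G y) v| ≤ |ξ₀| * (Aα * ‖v‖) := by
          rw [abs_mul]; exact mul_le_mul_of_nonneg_left ha1 habs0
        calc |ξ₀ * αc (G y) v + ξpm v| ≤ |ξ₀ * αc (G y) v| + |ξpm v| := abs_add_le _ _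
          _ ≤ |ξ₀| * (Aα * ‖v‖) + ‖ξpm‖ * ‖v‖ := add_le_add ha3 ha2
          _ = (|ξ₀| * Aα + ‖ξpm‖) * ‖v‖ := by ring
      have hbig : ‖ξ.comp (D y') - ξ.comp (D y)‖ ≤ (|ξ₀| * Aα + ‖ξpm‖) * (2 * M₁) := by
        apply ContinuousLinearMap.opNorm_le_bound
        · exact mul_nonneg (by linarith [mul_nonneg habs0 hAα0]) (by linarith)
        · intro v
          have q1 : ‖(ξ.comp (D y') - ξ.comp (D y)) v‖ = |ξ (D y' v) - ξ (D y v)| := by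
            simp only [ContinuousLinearMap.sub_apply, ContinuousLinearMap.comp_apply,
              Real.norm_eq_abs]
          rw [q1]
          have q2 : |ξ (D y' v)| ≤ ‖ξ‖ * (M₁ * ‖v‖) := by
            have t1 := ξ.le_opNorm (D y' v)
            rw [Real.norm_eq_abs] at t1
            have t3 := (D y').le_opNorm v
            have t4 := mul_le_mul_of_nonneg_right hM₁y' (norm_nonneg v)
            have t5 : ‖ξ‖ * ‖D y' v‖ ≤ ‖ξ‖ * (M₁ * ‖v‖) :=
              mul_le_mul_of_nonneg_left (by linarith) ξ.opNorm_nonneg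
            linarith
          have q3 : |ξ (D y v)| ≤ ‖ξ‖ * (M₁ * ‖v‖) := by
            have t1 := ξ.le_opNorm (D y v)
            rw [Real.norm_eq_abs] at t1
            have t3 := (D y).le_opNorm v
            have t4 := mul_le_mul_of_nonneg_right hM₁y (norm_nonneg v)
            have t5 : ‖ξ‖ * ‖D y v‖ ≤ ‖ξ‖ * (M₁ * ‖v‖) :=
              mul_le_mul_of_nonneg_left (by linarith) ξ.opNorm_nonneg
            linarith
          have q4 : ‖ξ‖ * (M₁ * ‖v‖) ≤ (|ξ₀| * Aα + ‖ξpm‖) * (M₁ * ‖v‖) :=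
            mul_le_mul_of_nonneg_right hξnorm (mul_nonneg hM₁0 (norm_nonneg v))
          have q5 := norm_sub_le (ξ (D y' v)) (ξ (D y v))
          simp only [Real.norm_eq_abs] at q5
          calc |ξ (D y' v) - ξ (D y v)| ≤ |ξ (D y' v)| + |ξ (D y v)| := q5
            _ ≤ (|ξ₀| * Aα + ‖ξpm‖) * (M₁ * ‖v‖) + (|ξ₀| * Aα + ‖ξpm‖) * (M₁ * ‖v‖) := by
                linarith
            _ = (|ξ₀| * Aα + ‖ξpm‖) * (2 * M₁) * ‖v‖ := by ring
      have e1 : 2 * M₁ * Aα ≤ C * δ ^ 2 := by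
        have := (div_le_iff₀ (by positivity : (0:ℝ) < δ ^ 2)).mp hC3
        linarith
      have e2 : 2 * M₁ ≤ C * δ := (div_le_iff₀ δpos).mp hC4
      have e3 : δ ≤ ‖y' - y‖ := hle.le
      have e4 : δ ^ 2 ≤ ‖y' - y‖ ^ 2 := by nlinarith [δpos.le, norm_nonneg (y' - y)]
      have f1 : 2 * M₁ * Aα * |ξ₀| ≤ C * δ ^ 2 * |ξ₀| :=
        mul_le_mul_of_nonneg_right e1 habs0
      have f2 : C * δ ^ 2 * |ξ₀| ≤ C * ‖y' - y‖ ^ 2 * |ξ₀| := by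
        have := mul_le_mul_of_nonneg_left e4 hC0.le
        exact mul_le_mul_of_nonneg_right this habs0
      have f3 : 2 * M₁ * ‖ξpm‖ ≤ C * δ * ‖ξpm‖ := mul_le_mul_of_nonneg_right e2 hnpm
      have f4 : C * δ * ‖ξpm‖ ≤ C * ‖y' - y‖ * ‖ξpm‖ := by
        have := mul_le_mul_of_nonneg_left e3 hC0.le
        exact mul_le_mul_of_nonneg_right this hnpm
      calc ‖ξ.comp (D y') - ξ.comp (D y)‖ ≤ (|ξ₀| * Aα + ‖ξpm‖) * (2 * M₁) := hbig
        _ ≤ C * (|ξ₀| * ‖y' - y‖ ^ 2 + ‖ξpm‖ * ‖y' - y‖) := by linarith [f1, f2, f3, f4]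
  · -- part (2)
    intro v w
    have hu' : HasFDerivAt (fun z => D z v)
        ((ContinuousLinearMap.apply ℝ (ℝ × (Fin d → ℝ) × (Fin d → ℝ)) v).comp (D2 y')) y' :=
      (ContinuousLinearMap.apply ℝ (ℝ × (Fin d → ℝ) × (Fin d → ℝ)) v).hasFDerivAt.comp
        y' (hD' y' (hKV hy'))
    have hfd : fderiv ℝ (fun x => D x v) y' =
        (ContinuousLinearMap.apply ℝ (ℝ × (Fin d → ℝ) × (Fin d → ℝ)) v).comp (D2 y') :=
      hu'.fderiv
    rw [hfd]
    have happ : (((ContinuousLinearMap.apply ℝ (ℝ × (Fin d → ℝ) × (Fin d → ℝ)) v).comp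
        (D2 y')) w) = D2 y' w v := rfl
    rw [happ, hξeq (D2 y' w v)]
    have h0 : αc (G y') (D2 y' w v) = 0 := keyA y' (hKV hy') v w
    have hrel : αc (G y) (D2 y' w v) = -(B (G y' - G y) (D2 y' w v)) := by
      have : αc (G y) (D2 y' w v) - αc (G y') (D2 y' w v)
          = -(B (G y' - G y) (D2 y' w v)) := by
        simp only [hαdef, ContinuousLinearMap.add_apply, map_sub,
          ContinuousLinearMap.sub_apply]
        ring
      rw [h0] at this; linarith
    have hD2b : ‖D2 y' w v‖ ≤ M₂ * ‖w‖ * ‖v‖ := by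
      have h1 := (D2 y').le_opNorm₂ w v
      have h2 : ‖D2 y'‖ * ‖w‖ * ‖v‖ ≤ M₂ * ‖w‖ * ‖v‖ := by
        have := mul_le_mul_of_nonneg_right hM₂y' (norm_nonneg w)
        exact mul_le_mul_of_nonneg_right this (norm_nonneg v)
      linarith
    have hb1 : |αc (G y) (D2 y' w v)| ≤ ‖B‖ * (LG * ‖y' - y‖) * (M₂ * ‖w‖ * ‖v‖) := by
      rw [hrel, abs_neg]
      have h1 : |B (G y' - G y) (D2 y' w v)| ≤ ‖B‖ * ‖G y' - G y‖ * ‖D2 y' w v‖ := by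
        have := B.le_opNorm₂ (G y' - G y) (D2 y' w v)
        simpa [Real.norm_eq_abs] using this
      have h2 : ‖B‖ * ‖G y' - G y‖ * ‖D2 y' w v‖ ≤
          ‖B‖ * (LG * ‖y' - y‖) * ‖D2 y' w v‖ := by
        have := mul_le_mul_of_nonneg_left (hGlipK y hy y' hy') B.opNorm_nonneg
        exact mul_le_mul_of_nonneg_right this (norm_nonneg _)
      have h3 : ‖B‖ * (LG * ‖y' - y‖) * ‖D2 y' w v‖ ≤
          ‖B‖ * (LG * ‖y' - y‖) * (M₂ * ‖w‖ * ‖v‖) := by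
        apply mul_le_mul_of_nonneg_left hD2b
        exact mul_nonneg B.opNorm_nonneg (mul_nonneg hLG0 (norm_nonneg _))
      linarith
    have hb2 : |ξpm (D2 y' w v)| ≤ ‖ξpm‖ * (M₂ * ‖w‖ * ‖v‖) := by
      have h1 := ξpm.le_opNorm (D2 y' w v)
      rw [Real.norm_eq_abs] at h1
      have h2 : ‖ξpm‖ * ‖D2 y' w v‖ ≤ ‖ξpm‖ * (M₂ * ‖w‖ * ‖v‖) :=
        mul_le_mul_of_nonneg_left hD2b hnpm
      linarith
    have hsplit : |ξ₀ * αc (G y) (D2 y' w v) + ξpm (D2 y' w v)| ≤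
        |ξ₀| * (‖B‖ * (LG * ‖y' - y‖) * (M₂ * ‖w‖ * ‖v‖)) + ‖ξpm‖ * (M₂ * ‖w‖ * ‖v‖) := by
      have h1 : |ξ₀ * αc (G y) (D2 y' w v)| ≤
          |ξ₀| * (‖B‖ * (LG * ‖y' - y‖) * (M₂ * ‖w‖ * ‖v‖)) := by
        rw [abs_mul]; exact mul_le_mul_of_nonneg_left hb1 habs0
      calc |ξ₀ * αc (G y) (D2 y' w v) + ξpm (D2 y' w v)| ≤
          |ξ₀ * αc (G y) (D2 y' w v)| + |ξpm (D2 y' w v)| := abs_add_le _ _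
        _ ≤ _ := add_le_add h1 hb2
    have hvw : (0:ℝ) ≤ ‖w‖ * ‖v‖ := mul_nonneg (norm_nonneg _) (norm_nonneg _)
    have u1 : |ξ₀| * (‖B‖ * (LG * ‖y' - y‖) * (M₂ * ‖w‖ * ‖v‖)) ≤
        C * (|ξ₀| * ‖y' - y‖) * ‖v‖ * ‖w‖ := by
      have t : 0 ≤ |ξ₀| * ‖y' - y‖ * (‖w‖ * ‖v‖) :=
        mul_nonneg (mul_nonneg habs0 (norm_nonneg _)) hvw
      have := mul_le_mul_of_nonneg_right hC5 t
      calc |ξ₀| * (‖B‖ * (LG * ‖y' - y‖) * (M₂ * ‖w‖ * ‖v‖))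
          = ‖B‖ * LG * M₂ * (|ξ₀| * ‖y' - y‖ * (‖w‖ * ‖v‖)) := by ring
        _ ≤ C * (|ξ₀| * ‖y' - y‖ * (‖w‖ * ‖v‖)) := this
        _ = C * (|ξ₀| * ‖y' - y‖) * ‖v‖ * ‖w‖ := by ring
    have u2 : ‖ξpm‖ * (M₂ * ‖w‖ * ‖v‖) ≤ C * ‖ξpm‖ * ‖v‖ * ‖w‖ := by
      have t : 0 ≤ ‖ξpm‖ * (‖w‖ * ‖v‖) := mul_nonneg hnpm hvw
      have := mul_le_mul_of_nonneg_right hC6 t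
      calc ‖ξpm‖ * (M₂ * ‖w‖ * ‖v‖) = M₂ * (‖ξpm‖ * (‖w‖ * ‖v‖)) := by ring
        _ ≤ C * (‖ξpm‖ * (‖w‖ * ‖v‖)) := this
        _ = C * ‖ξpm‖ * ‖v‖ * ‖w‖ := by ring
    calc |ξ₀ * αc (G y) (D2 y' w v) + ξpm (D2 y' w v)| ≤
        |ξ₀| * (‖B‖ * (LG * ‖y' - y‖) * (M₂ * ‖w‖ * ‖v‖)) + ‖ξpm‖ * (M₂ * ‖w‖ * ‖v‖) :=
        hsplit
      _ ≤ C * (|ξ₀| * ‖y' - y‖) * ‖v‖ * ‖w‖ + C * ‖ξpm‖ * ‖v‖ * ‖w‖ := add_le_add u1 u2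
      _ = C * (|ξ₀| * ‖y' - y‖ + ‖ξpm‖) * ‖v‖ * ‖w‖ := by ring
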